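/- For every finite graph G with lw(G) ≥ 1, the pathwidth of G is at most the linearwidth of G: pw(G) ≤ lw(G). -/

import Mathlib

set_option linter.unusedSectionVars false
set_option maxHeartbeats 1000000


variable {V : Type*} [Fintype V] [DecidableEq V]

/-- `Vs F` is the set of endpoints of edges in `F`. -/
def Vs (F : Finset (Sym2 V)) : Finset V :=
  Finset.univ.filter (fun v => ∃ e ∈ F, v ∈ e)

/-- The set of endpoints of a single edge. -/
def eset (e : Sym2 V) : Finset V := Finset.univ.filter (fun v => v ∈ e)

/-- `mids E F` is mid(F) = V(F) ∩ V(E \ F), relative to the edge set `E`. -/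
def mids (E F : Finset (Sym2 V)) : Finset V := Vs F ∩ Vs (E \ F)

/-- `dd E F` is d(F) = |mid(F)|, relative to the edge set `E`. -/
def dd (E F : Finset (Sym2 V)) : ℕ := (mids E F).card

/-- A layout of the edge set `E`: a duplicate-free list enumerating `E`
(equivalently, a bijection {1,…,m} → E). -/
def IsLayout (E : Finset (Sym2 V)) (L : List (Sym2 V)) : Prop :=
  L.Nodup ∧ L.toFinset = E

/-- The (partial) layout `L` has width at most `k` w.r.t. the edge set `E`:
every prefix `π_{≤ i}` satisfies d(π_{≤ i}) ≤ k. -/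
def WidthLE (E : Finset (Sym2 V)) (L : List (Sym2 V)) (k : ℕ) : Prop :=
  ∀ i, dd E (L.take i).toFinset ≤ k

/-- The linearwidth of the edge set `E`: the minimum width of a layout of `E`. -/
noncomputable def lw (E : Finset (Sym2 V)) : ℕ :=
  sInf {k | ∃ L, IsLayout E L ∧ WidthLE E L k}

/-- The number of edges of `S` incident to `u`. -/
def degIn (S : Finset (Sym2 V)) (u : V) : ℕ := (S.filter (fun e => u ∈ e)).card

/-- `X` is a path decomposition of `G`, given as a list of bags. -/
def IsPD (G : SimpleGraph V) (X : List (Finset V)) : Prop :=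
  (∀ v : V, ∃ B ∈ X, v ∈ B) ∧
  (∀ e ∈ G.edgeSet, ∃ B ∈ X, eset e ⊆ B) ∧
  (∀ v : V, ∀ i j l : ℕ, i ≤ j → j ≤ l → l < X.length →
    v ∈ X.getD i ∅ → v ∈ X.getD l ∅ → v ∈ X.getD j ∅)

/-- The pathwidth of `G`: the minimum over path decompositions of (max bag size) − 1. -/
noncomputable def pw (G : SimpleGraph V) : ℕ :=
  sInf {k | ∃ X, IsPD G X ∧ ∀ B ∈ X, B.card ≤ k + 1}

/-- The closure F* of `F` in `E`: all edges of `E` with both endpoints in `V(F)`. -/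
def cl (E F : Finset (Sym2 V)) : Finset (Sym2 V) := E.filter (fun e => eset e ⊆ Vs F)

/-- A partial layout `S` is `k`-extendable: it is a prefix of some layout
of `E` of width at most `k`. -/
def Extendable (E : Finset (Sym2 V)) (k : ℕ) (S : List (Sym2 V)) : Prop :=
  ∃ L, IsLayout E L ∧ WidthLE E L k ∧ S <+: L



lemma mem_Vs {v : V} {F : Finset (Sym2 V)} : v ∈ Vs F ↔ ∃ e ∈ F, v ∈ e := by simp [Vs]
lemma mem_eset {v : V} {e : Sym2 V} : v ∈ eset e ↔ v ∈ e := by simp [eset]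
lemma Vs_mono {F F' : Finset (Sym2 V)} (h : F ⊆ F') : Vs F ⊆ Vs F' := by
  intro v hv; rw [mem_Vs] at *; obtain ⟨e, he, hve⟩ := hv; exact ⟨e, h he, hve⟩
lemma eset_card_le (e : Sym2 V) : (eset e).card ≤ 2 := by
  induction e using Sym2.ind with
  | _ x y =>
    have : eset s(x,y) ⊆ {x, y} := by intro v hv; rw [mem_eset, Sym2.mem_iff] at hv; simpa using hv
    exact (Finset.card_le_card this).trans ((Finset.card_insert_le _ _).trans (by simp))
lemma take_toFinset_mono (L : List (Sym2 V)) {a b : ℕ} (hab : a ≤ b) :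
    (L.take a).toFinset ⊆ (L.take b).toFinset := by
  intro x hx
  rw [List.mem_toFinset] at *
  have h : L.take a = (L.take b).take a := by rw [List.take_take, min_eq_left hab]
  rw [h] at hx
  exact (List.take_prefix _ _).subset hx
lemma take_toFinset_subset {E : Finset (Sym2 V)} {L : List (Sym2 V)} (hE : L.toFinset = E) (t : ℕ) :
    (L.take t).toFinset ⊆ E := by
  intro x hx; rw [← hE, List.mem_toFinset] at *; exact (List.take_prefix _ _).subset hx
lemma take_succ_toFinset (L : List (Sym2 V)) {t : ℕ} (ht : t < L.length) :
    (L.take (t+1)).toFinset = insert L[t] (L.take t).toFinset := by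
  rw [List.take_succ, List.getElem?_eq_getElem ht]
  simp only [Option.toList_some, List.toFinset_append, List.toFinset_cons, List.toFinset_nil,
    insert_empty_eq]
  rw [Finset.union_comm]
  simp [Finset.insert_eq, -Finset.singleton_union]
lemma getElem_not_mem_take {L : List (Sym2 V)} (hN : L.Nodup) {t : ℕ} (ht : t < L.length) :
    L[t] ∉ (L.take t).toFinset := by
  intro hmem
  rw [List.mem_toFinset] at hmem
  obtain ⟨s, hs, hse⟩ := List.mem_iff_getElem.1 hmem
  rw [List.length_take] at hs
  rw [List.getElem_take] at hse
  have : s = t := (hN.getElem_inj_iff).1 hse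
  omega
lemma getElem_mem_E {E : Finset (Sym2 V)} {L : List (Sym2 V)} (hE : L.toFinset = E) {t : ℕ}
    (ht : t < L.length) : L[t] ∈ E := by
  rw [← hE, List.mem_toFinset]; exact List.getElem_mem ht

/-- `e` is an isolated edge of `E`: it shares no vertex with any other edge of `E`. -/
def IsoE (E : Finset (Sym2 V)) (e : Sym2 V) : Prop :=
  ∀ f ∈ E, ∀ w ∈ eset e, w ∈ eset f → f = e

open Classical in
/-- The main bag at position `t` of the layout `L`. -/
noncomputable def mbag (E : Finset (Sym2 V)) (L : List (Sym2 V)) (t : ℕ) : Finset V :=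
  mids E (L.take t).toFinset ∪ mids E (L.take (t+1)).toFinset ∪
    ((L.take (t+1)).toFinset \ (L.take t).toFinset).biUnion
      (fun e => if IsoE E e then ∅ else eset e)

open Classical in
lemma mbag_eq {E : Finset (Sym2 V)} {L : List (Sym2 V)} (hN : L.Nodup) {t : ℕ}
    (ht : t < L.length) :
    mbag E L t = mids E (L.take t).toFinset ∪ mids E (L.take (t+1)).toFinset ∪
      (if IsoE E L[t] then ∅ else eset L[t]) := by
  have h1 : (L.take (t+1)).toFinset \ (L.take t).toFinset = {L[t]} := by
    rw [take_succ_toFinset L ht, Finset.insert_sdiff_of_notMem _ (getElem_not_mem_take hN ht)]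
    simp
  rw [mbag, h1, Finset.singleton_biUnion]

lemma mem_mids {E F : Finset (Sym2 V)} {v : V} :
    v ∈ mids E F ↔ v ∈ Vs F ∧ v ∈ Vs (E \ F) := by simp [mids]

lemma mids_subset_left {E F : Finset (Sym2 V)} : mids E F ⊆ Vs F :=
  fun v hv => (mem_mids.1 hv).1
lemma mids_subset_right {E F : Finset (Sym2 V)} : mids E F ⊆ Vs (E \ F) :=
  fun v hv => (mem_mids.1 hv).2

lemma Vs_sdiff_mono {E F F' : Finset (Sym2 V)} (h : F ⊆ F') : Vs (E \ F') ⊆ Vs (E \ F) :=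
  Vs_mono (Finset.sdiff_subset_sdiff (Finset.Subset.refl _) h)

lemma mem_mbag_left {E : Finset (Sym2 V)} {L : List (Sym2 V)} {t : ℕ} {v : V}
    (hv : v ∈ mbag E L t) : v ∈ Vs (L.take (t+1)).toFinset := by
  rw [mbag] at hv
  rcases Finset.mem_union.1 hv with hv | hv
  · rcases Finset.mem_union.1 hv with hv | hv
    · exact Vs_mono (take_toFinset_mono L (Nat.le_succ t)) (mids_subset_left hv)
    · exact mids_subset_left hv
  · obtain ⟨f, hf, hvf⟩ := Finset.mem_biUnion.1 hv
    split at hvf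
    · simp at hvf
    · rw [mem_eset] at hvf
      exact mem_Vs.2 ⟨f, (Finset.mem_sdiff.1 hf).1, hvf⟩

lemma mem_mbag_right {E : Finset (Sym2 V)} {L : List (Sym2 V)} (hE : L.toFinset = E) {t : ℕ}
    {v : V} (hv : v ∈ mbag E L t) : v ∈ Vs (E \ (L.take t).toFinset) := by
  rw [mbag] at hv
  rcases Finset.mem_union.1 hv with hv | hv
  · rcases Finset.mem_union.1 hv with hv | hv
    · exact mids_subset_right hv
    · exact Vs_sdiff_mono (take_toFinset_mono L (Nat.le_succ t)) (mids_subset_right hv)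
  · obtain ⟨f, hf, hvf⟩ := Finset.mem_biUnion.1 hv
    split at hvf
    · simp at hvf
    · rw [mem_eset] at hvf
      rcases Finset.mem_sdiff.1 hf with ⟨hf1, hf2⟩
      exact mem_Vs.2 ⟨f, Finset.mem_sdiff.2 ⟨take_toFinset_subset hE _ hf1, hf2⟩, hvf⟩

lemma mbag_subset_Vs {E : Finset (Sym2 V)} {L : List (Sym2 V)} (hE : L.toFinset = E) (t : ℕ) :
    mbag E L t ⊆ Vs E := by
  intro v hv
  have := mem_mbag_right hE hv
  exact Vs_mono (Finset.sdiff_subset) this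

lemma mbag_convex {E : Finset (Sym2 V)} {L : List (Sym2 V)} (hE : L.toFinset = E)
    {v : V} {t1 j t2 : ℕ} (h1 : t1 ≤ j) (h2 : j ≤ t2)
    (hv1 : v ∈ mbag E L t1) (hv2 : v ∈ mbag E L t2) : v ∈ mbag E L j := by
  rcases eq_or_lt_of_le h1 with rfl | h1'
  · exact hv1
  · have hD : v ∈ mids E (L.take j).toFinset := by
      rw [mem_mids]
      constructor
      · exact Vs_mono (take_toFinset_mono L h1') (mem_mbag_left hv1)
      · exact Vs_sdiff_mono (take_toFinset_mono L h2) (mem_mbag_right hE hv2)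
    rw [mbag]
    exact Finset.mem_union.2 (Or.inl (Finset.mem_union.2 (Or.inl hD)))

lemma not_mem_mbag_of_iso {E : Finset (Sym2 V)} {L : List (Sym2 V)} (hE : L.toFinset = E)
    {e : Sym2 V} {v : V} (he : e ∈ E) (hv : v ∈ eset e) (hiso : IsoE E e) (t : ℕ) :
    v ∉ mbag E L t := by
  have huniq : ∀ f ∈ E, v ∈ eset f → f = e := fun f hf hvf => hiso f hf v hv hvf
  have hmid : ∀ s : ℕ, v ∉ mids E (L.take s).toFinset := by
    intro s hm
    rw [mem_mids] at hm
    obtain ⟨g, hg1, hg2⟩ := mem_Vs.1 hm.1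
    obtain ⟨f, hf1, hf2⟩ := mem_Vs.1 hm.2
    rcases Finset.mem_sdiff.1 hf1 with ⟨hf3, hf4⟩
    have hge : g = e := huniq g (take_toFinset_subset hE s hg1) (mem_eset.2 hg2)
    have hfe : f = e := huniq f hf3 (mem_eset.2 hf2)
    subst hge; subst hfe; exact hf4 hg1
  intro hmem
  rw [mbag] at hmem
  rcases Finset.mem_union.1 hmem with hm | hm
  · rcases Finset.mem_union.1 hm with hm | hm
    · exact hmid t hm
    · exact hmid (t+1) hm
  · obtain ⟨f, hf, hvf⟩ := Finset.mem_biUnion.1 hm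
    split at hvf
    · simp at hvf
    · rename_i hnotiso
      have hfE : f ∈ E := take_toFinset_subset hE _ (Finset.mem_sdiff.1 hf).1
      exact hnotiso (huniq f hfE hvf ▸ hiso)

lemma mbag_card_le {E : Finset (Sym2 V)} {L : List (Sym2 V)} {k : ℕ} (hN : L.Nodup)
    (hE : L.toFinset = E) (hW : WidthLE E L k) {t : ℕ} (ht : t < L.length) :
    (mbag E L t).card ≤ k + 1 := by
  classical
  set e := L[t] with he_def
  set D0 := mids E (L.take t).toFinset with hD0
  set D1 := mids E (L.take (t+1)).toFinset with hD1
  have hDcard0 : D0.card ≤ k := hW t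
  have hDcard1 : D1.card ≤ k := hW (t+1)
  have heE : e ∈ E := getElem_mem_E hE ht
  have henot : e ∉ (L.take t).toFinset := getElem_not_mem_take hN ht
  have htake1 : (L.take (t+1)).toFinset = insert e (L.take t).toFinset := take_succ_toFinset L ht
  rw [mbag_eq hN ht, ← he_def, ← hD0, ← hD1]
  by_cases hiso : IsoE E e
  · rw [if_pos hiso]
    have hsub : D0 ⊆ D1 := by
      intro v hv
      rw [hD0, mem_mids] at hv
      rw [hD1, mem_mids]
      obtain ⟨h1, h2⟩ := hv
      refine ⟨Vs_mono (take_toFinset_mono L (Nat.le_succ t)) h1, ?_⟩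
      obtain ⟨f, hf, hvf⟩ := mem_Vs.1 h2
      rcases Finset.mem_sdiff.1 hf with ⟨hf1, hf2⟩
      have hfne : f ≠ e := by
        rintro rfl
        obtain ⟨g, hg, hvg⟩ := mem_Vs.1 h1
        have hgE : g ∈ E := take_toFinset_subset hE t hg
        have hgne : g ≠ e := by rintro rfl; exact henot hg
        exact hgne (hiso g hgE v (mem_eset.2 hvf) (mem_eset.2 hvg))
      refine mem_Vs.2 ⟨f, Finset.mem_sdiff.2 ⟨hf1, ?_⟩, hvf⟩
      rw [htake1]
      simp only [Finset.mem_insert]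
      tauto
    have : D0 ∪ D1 ∪ ∅ = D1 := by rw [Finset.union_empty, Finset.union_eq_right.2 hsub]
    rw [this]
    exact hDcard1.trans (Nat.le_succ k)
  · rw [if_neg hiso]
    -- D1 ⊆ D0 ∪ eset e
    have hsub1 : D1 ⊆ D0 ∪ eset e := by
      intro v hv
      rw [hD1, mem_mids] at hv
      obtain ⟨h1, h2⟩ := hv
      obtain ⟨g, hg, hvg⟩ := mem_Vs.1 h1
      rw [htake1] at hg
      rcases Finset.mem_insert.1 hg with rfl | hg'
      · exact Finset.mem_union_right _ (mem_eset.2 hvg)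
      · refine Finset.mem_union_left _ ?_
        rw [hD0, mem_mids]
        exact ⟨mem_Vs.2 ⟨g, hg', hvg⟩,
          Vs_sdiff_mono (take_toFinset_mono L (Nat.le_succ t)) h2⟩
    have hbag : D0 ∪ D1 ∪ eset e = D0 ∪ eset e := by
      apply Finset.Subset.antisymm
      · intro v hv
        rcases Finset.mem_union.1 hv with hv | hv
        · rcases Finset.mem_union.1 hv with hv | hv
          · exact Finset.mem_union_left _ hv
          · exact hsub1 hv
        · exact Finset.mem_union_right _ hv
      · intro v hv
        rcases Finset.mem_union.1 hv with hv | hv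
        · exact Finset.mem_union_left _ (Finset.mem_union_left _ hv)
        · exact Finset.mem_union_right _ hv
    rw [hbag]
    by_cases hc : (eset e \ D1).card ≤ 1
    · -- D0 ∪ eset e ⊆ D1 ∪ (eset e \ D1)
      have hsub2 : D0 ∪ eset e ⊆ D1 ∪ (eset e \ D1) := by
        intro v hv
        by_cases hv1 : v ∈ D1
        · exact Finset.mem_union_left _ hv1
        by_cases hve : v ∈ eset e
        · exact Finset.mem_union_right _ (Finset.mem_sdiff.2 ⟨hve, hv1⟩)
        -- v ∈ D0 \ eset e, show v ∈ D1: contradiction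
        exfalso
        apply hv1
        have hvD0 : v ∈ D0 := by
          rcases Finset.mem_union.1 hv with h | h
          · exact h
          · exact absurd h hve
        rw [hD0, mem_mids] at hvD0
        obtain ⟨h1, h2⟩ := hvD0
        rw [hD1, mem_mids]
        refine ⟨Vs_mono (take_toFinset_mono L (Nat.le_succ t)) h1, ?_⟩
        obtain ⟨f, hf, hvf⟩ := mem_Vs.1 h2
        rcases Finset.mem_sdiff.1 hf with ⟨hf1, hf2⟩
        have hfne : f ≠ e := by rintro rfl; exact hve (mem_eset.2 hvf)
        refine mem_Vs.2 ⟨f, Finset.mem_sdiff.2 ⟨hf1, ?_⟩, hvf⟩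
        rw [htake1]
        simp only [Finset.mem_insert]
        tauto
      calc (D0 ∪ eset e).card ≤ (D1 ∪ (eset e \ D1)).card := Finset.card_le_card hsub2
        _ ≤ D1.card + (eset e \ D1).card := Finset.card_union_le _ _
        _ ≤ k + 1 := Nat.add_le_add hDcard1 hc
    · -- both endpoints avoid D1
      push_neg at hc
      have hdsub : eset e \ D1 ⊆ eset e := Finset.sdiff_subset
      have heq : eset e \ D1 = eset e := by
        apply Finset.eq_of_subset_of_card_le hdsub
        have := eset_card_le e
        omega
      have hnoD1 : ∀ w ∈ eset e, w ∉ D1 := by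
        intro w hw
        have : w ∈ eset e \ D1 := by rw [heq]; exact hw
        exact (Finset.mem_sdiff.1 this).2
      -- e is not isolated: get w ∈ eset e shared with another edge f
      rw [IsoE] at hiso
      push_neg at hiso
      obtain ⟨f, hfE, w, hwe, hwf, hfne⟩ := hiso
      -- w ∈ D0
      have hwD0 : w ∈ D0 := by
        have hwVs1 : w ∈ Vs (L.take (t+1)).toFinset := by
          refine mem_Vs.2 ⟨e, ?_, mem_eset.1 hwe⟩
          rw [htake1]; exact Finset.mem_insert_self _ _
        have hwnot : w ∉ Vs (E \ (L.take (t+1)).toFinset) := by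
          intro hcon
          exact hnoD1 w hwe (by rw [hD1, mem_mids]; exact ⟨hwVs1, hcon⟩)
        have hfmem : f ∈ (L.take (t+1)).toFinset := by
          by_contra hcon
          exact hwnot (mem_Vs.2 ⟨f, Finset.mem_sdiff.2 ⟨hfE, hcon⟩, mem_eset.1 hwf⟩)
        rw [htake1] at hfmem
        rcases Finset.mem_insert.1 hfmem with rfl | hfmem'
        · exact absurd rfl hfne
        rw [hD0, mem_mids]
        refine ⟨mem_Vs.2 ⟨f, hfmem', mem_eset.1 hwf⟩, ?_⟩
        exact mem_Vs.2 ⟨e, Finset.mem_sdiff.2 ⟨heE, henot⟩, mem_eset.1 hwe⟩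
      -- bound
      have hsub3 : D0 ∪ eset e ⊆ D0 ∪ (eset e).erase w := by
        intro v hv
        rcases Finset.mem_union.1 hv with hv | hv
        · exact Finset.mem_union_left _ hv
        by_cases hvw : v = w
        · exact Finset.mem_union_left _ (hvw ▸ hwD0)
        · exact Finset.mem_union_right _ (Finset.mem_erase.2 ⟨hvw, hv⟩)
      calc (D0 ∪ eset e).card ≤ (D0 ∪ (eset e).erase w).card := Finset.card_le_card hsub3
        _ ≤ D0.card + ((eset e).erase w).card := Finset.card_union_le _ _
        _ ≤ k + 1 := by
            have h1 : ((eset e).erase w).card = (eset e).card - 1 :=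
              Finset.card_erase_of_mem hwe
            have h2 := eset_card_le e
            omega

/-- The list of isolated vertices of `E`. -/
noncomputable def isolV (E : Finset (Sym2 V)) : List V :=
  (Finset.univ.filter (fun v : V => v ∉ Vs E)).toList

open Classical in
/-- The list of isolated edges of `E`. -/
noncomputable def isolE (E : Finset (Sym2 V)) : List (Sym2 V) :=
  (E.filter (fun e => IsoE E e)).toList

/-- The full list of bags. -/
noncomputable def bags (E : Finset (Sym2 V)) (L : List (Sym2 V)) : List (Finset V) :=
  (isolV E).map (fun v => ({v} : Finset V)) ++
    ((isolE E).map eset ++ (List.range L.length).map (mbag E L))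

lemma bags_length (E : Finset (Sym2 V)) (L : List (Sym2 V)) :
    (bags E L).length = (isolV E).length + ((isolE E).length + L.length) := by
  simp [bags]

lemma bags_getElem_A (E : Finset (Sym2 V)) (L : List (Sym2 V)) {j : ℕ}
    (hj : j < (isolV E).length) (hj' : j < (bags E L).length) :
    (bags E L)[j] = {(isolV E)[j]} := by
  simp only [bags]
  rw [List.getElem_append_left (by simpa using hj), List.getElem_map]

lemma bags_getElem_B (E : Finset (Sym2 V)) (L : List (Sym2 V)) {j : ℕ}
    (hj1 : (isolV E).length ≤ j) (hj2 : j < (isolV E).length + (isolE E).length)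
    (hj' : j < (bags E L).length)
    (hx : j - (isolV E).length < (isolE E).length) :
    (bags E L)[j] = eset (isolE E)[j - (isolV E).length] := by
  simp only [bags]
  rw [List.getElem_append_right (by simpa using hj1),
    List.getElem_append_left (by simp; omega), List.getElem_map]
  simp

lemma bags_getElem_M (E : Finset (Sym2 V)) (L : List (Sym2 V)) {j : ℕ}
    (hj1 : (isolV E).length + (isolE E).length ≤ j) (hj' : j < (bags E L).length) :
    (bags E L)[j] = mbag E L (j - (isolV E).length - (isolE E).length) := by
  have hl := bags_length E L
  simp only [bags]
  rw [List.getElem_append_right (by simp; omega),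
    List.getElem_append_right (by simp; omega), List.getElem_map, List.getElem_range]
  congr 1
  simp

lemma mem_isolV {E : Finset (Sym2 V)} {w : V} (hw : w ∈ isolV E) : w ∉ Vs E :=
  (Finset.mem_filter.1 (Finset.mem_toList.1 hw)).2

lemma mem_isolE {E : Finset (Sym2 V)} {f : Sym2 V} (hf : f ∈ isolE E) : f ∈ E ∧ IsoE E f := by
  classical
  simpa [isolE] using hf

lemma bags_isPD (G : SimpleGraph V) [DecidableRel G.Adj] {L : List (Sym2 V)} (hN : L.Nodup)
    (hE : L.toFinset = G.edgeFinset) : IsPD G (bags G.edgeFinset L) := by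
  classical
  set E := G.edgeFinset with hEdef
  set X := bags E L with hX
  set la := (isolV E).length with hla
  set lb := (isolE E).length with hlb
  have hlen : X.length = la + (lb + L.length) := bags_length E L
  refine ⟨?_, ?_, ?_⟩
  · -- vertex coverage
    intro v
    by_cases hv : v ∈ Vs E
    · by_cases hvi : ∃ e ∈ E, v ∈ eset e ∧ IsoE E e
      · obtain ⟨e, heE, hve, hiso⟩ := hvi
        refine ⟨eset e, ?_, hve⟩
        refine List.mem_append.2 (Or.inr (List.mem_append.2 (Or.inl ?_)))
        refine List.mem_map.2 ⟨e, ?_, rfl⟩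
        rw [isolE]
        exact Finset.mem_toList.2 (Finset.mem_filter.2 ⟨heE, hiso⟩)
      · obtain ⟨e, heE, hve⟩ := mem_Vs.1 hv
        have hnot : ¬ IsoE E e := fun hcon => hvi ⟨e, heE, mem_eset.2 hve, hcon⟩
        have heL : e ∈ L := by rw [← List.mem_toFinset, hE]; exact heE
        obtain ⟨t, ht, rfl⟩ := List.mem_iff_getElem.1 heL
        refine ⟨mbag E L t, ?_, ?_⟩
        · refine List.mem_append.2 (Or.inr (List.mem_append.2 (Or.inr ?_)))
          exact List.mem_map.2 ⟨t, List.mem_range.2 ht, rfl⟩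
        · rw [mbag_eq hN ht, if_neg hnot]
          exact Finset.mem_union_right _ (mem_eset.2 hve)
    · refine ⟨{v}, ?_, Finset.mem_singleton_self v⟩
      refine List.mem_append.2 (Or.inl ?_)
      refine List.mem_map.2 ⟨v, ?_, rfl⟩
      rw [isolV]
      exact Finset.mem_toList.2 (Finset.mem_filter.2 ⟨Finset.mem_univ v, hv⟩)
  · -- edge coverage
    intro e he
    have heE : e ∈ E := SimpleGraph.mem_edgeFinset.2 he
    by_cases hiso : IsoE E e
    · refine ⟨eset e, ?_, Finset.Subset.refl _⟩
      refine List.mem_append.2 (Or.inr (List.mem_append.2 (Or.inl ?_)))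
      refine List.mem_map.2 ⟨e, ?_, rfl⟩
      rw [isolE]
      exact Finset.mem_toList.2 (Finset.mem_filter.2 ⟨heE, hiso⟩)
    · have heL : e ∈ L := by rw [← List.mem_toFinset, hE]; exact heE
      obtain ⟨t, ht, rfl⟩ := List.mem_iff_getElem.1 heL
      refine ⟨mbag E L t, ?_, ?_⟩
      · refine List.mem_append.2 (Or.inr (List.mem_append.2 (Or.inr ?_)))
        exact List.mem_map.2 ⟨t, List.mem_range.2 ht, rfl⟩
      · rw [mbag_eq hN ht, if_neg hiso]
        exact Finset.subset_union_right
  · -- interval condition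
    intro v i j l hij hjl hl hvi hvl
    have hi : i < X.length := by omega
    have hj : j < X.length := by omega
    rw [List.getD_eq_getElem _ _ hi] at hvi
    rw [List.getD_eq_getElem _ _ hl] at hvl
    rw [List.getD_eq_getElem _ _ hj]
    by_cases hv : v ∈ Vs E
    · by_cases hvIso : ∃ e ∈ E, v ∈ eset e ∧ IsoE E e
      · obtain ⟨e, heE, hve, hiso⟩ := hvIso
        have key : ∀ m (hm : m < X.length), v ∈ X[m] →
            ∃ (h1 : la ≤ m) (h2 : m < la + lb), (isolE E)[m - la]'(by omega) = e := by
          intro m hm hvm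
          rcases Nat.lt_or_ge m la with h1 | h1
          · rw [bags_getElem_A E L h1] at hvm
            rw [Finset.mem_singleton] at hvm
            exact absurd hv (hvm ▸ mem_isolV (List.getElem_mem h1))
          rcases Nat.lt_or_ge m (la + lb) with h2 | h2
          · rw [bags_getElem_B E L h1 h2 hm (by omega)] at hvm
            have hf := mem_isolE (List.getElem_mem (by omega : m - la < (isolE E).length))
            exact ⟨h1, h2, hiso _ hf.1 v hve hvm⟩
          · rw [bags_getElem_M E L (by omega) hm] at hvm
            exact absurd hvm (not_mem_mbag_of_iso hE heE hve hiso _)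
        obtain ⟨h1i, h2i, heqi⟩ := key i hi hvi
        obtain ⟨h1l, h2l, heql⟩ := key l hl hvl
        have : i - la = l - la :=
          ((Finset.nodup_toList _).getElem_inj_iff).1 (heqi.trans heql.symm)
        have hji : j = i := by omega
        subst hji
        exact hvi
      · have key : ∀ m (hm : m < X.length), v ∈ X[m] → la + lb ≤ m := by
          intro m hm hvm
          rcases Nat.lt_or_ge m la with h1 | h1
          · rw [bags_getElem_A E L h1] at hvm
            rw [Finset.mem_singleton] at hvm
            exact absurd hv (hvm ▸ mem_isolV (List.getElem_mem h1))
          rcases Nat.lt_or_ge m (la + lb) with h2 | h2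
          · rw [bags_getElem_B E L h1 h2 hm (by omega)] at hvm
            have hf := mem_isolE (List.getElem_mem (by omega : m - la < (isolE E).length))
            exact absurd ⟨_, hf.1, hvm, hf.2⟩ hvIso
          · exact h2
        have hi' := key i hi hvi
        have hl' := key l hl hvl
        have hj' : la + lb ≤ j := le_trans hi' hij
        rw [bags_getElem_M E L (by omega) hi] at hvi
        rw [bags_getElem_M E L (by omega) hl] at hvl
        rw [bags_getElem_M E L (by omega) hj]
        exact mbag_convex hE (by omega) (by omega) hvi hvl
    · have key : ∀ m (hm : m < X.length), v ∈ X[m] →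
          ∃ (h1 : m < la), (isolV E)[m]'h1 = v := by
        intro m hm hvm
        rcases Nat.lt_or_ge m la with h1 | h1
        · rw [bags_getElem_A E L h1] at hvm
          rw [Finset.mem_singleton] at hvm
          exact ⟨h1, hvm.symm⟩
        rcases Nat.lt_or_ge m (la + lb) with h2 | h2
        · rw [bags_getElem_B E L h1 h2 hm (by omega)] at hvm
          have hf := mem_isolE (List.getElem_mem (by omega : m - la < (isolE E).length))
          exact absurd (mem_Vs.2 ⟨_, hf.1, mem_eset.1 hvm⟩) hv
        · rw [bags_getElem_M E L (by omega) hm] at hvm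
          exact absurd (mbag_subset_Vs hE _ hvm) hv
      obtain ⟨h1i, heqi⟩ := key i hi hvi
      obtain ⟨h1l, heql⟩ := key l hl hvl
      have : i = l := ((Finset.nodup_toList _).getElem_inj_iff).1 (heqi.trans heql.symm)
      have hji : j = i := by omega
      subst hji
      exact hvi

lemma bags_card_le {E : Finset (Sym2 V)} {L : List (Sym2 V)} {k : ℕ} (hN : L.Nodup)
    (hE : L.toFinset = E) (hW : WidthLE E L k) (hk : 1 ≤ k) :
    ∀ B ∈ bags E L, B.card ≤ k + 1 := by
  intro B hB
  rcases List.mem_append.1 hB with hB | hB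
  · obtain ⟨w, _, rfl⟩ := List.mem_map.1 hB
    simp only [Finset.card_singleton]
    omega
  rcases List.mem_append.1 hB with hB | hB
  · obtain ⟨f, _, rfl⟩ := List.mem_map.1 hB
    exact (eset_card_le f).trans (by omega)
  · obtain ⟨t, ht, rfl⟩ := List.mem_map.1 hB
    exact mbag_card_le hN hE hW (List.mem_range.1 ht)

/-- For every graph with lw(G) ≥ 1, pw(G) ≤ lw(G). -/
theorem stmt7 (G : SimpleGraph V) [DecidableRel G.Adj]
    (h : 1 ≤ lw G.edgeFinset) : pw G ≤ lw G.edgeFinset := by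
  classical
  set E := G.edgeFinset with hEdef
  have hne : {k | ∃ L, IsLayout E L ∧ WidthLE E L k}.Nonempty := by
    refine ⟨Fintype.card V, E.toList, ⟨E.nodup_toList, Finset.toList_toFinset E⟩, ?_⟩
    intro i
    exact (Finset.card_le_univ _).trans_eq Finset.card_univ
  obtain ⟨L, ⟨hN, hE⟩, hW⟩ := Nat.sInf_mem hne
  apply Nat.sInf_le
  exact ⟨bags E L, bags_isPD G hN hE, bags_card_le hN hE hW h⟩
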